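/- The minimal class of a quadratic normalisation is either a pair (m, n) of natural numbers with |m − n| ≤ 1, or (∞, ∞). -/
import Mathlib


/-- Apply `N` to the length-two factor of `w` at positions `i, i+1` (1-indexed). -/
def applyAt {A : Type*} (N : List A → List A) (i : ℕ) (w : List A) : List A :=
  w.take (i - 1) ++ N ((w.drop (i - 1)).take 2) ++ w.drop (i + 1)

/-- Apply `N` to length-two factors at the given sequence of positions,
leftmost position in the list applied first. -/
def applySeq {A : Type*} (N : List A → List A) (pos : List ℕ) (w : List A) : List A :=
  pos.foldl (fun v i => applyAt N i v) w

/-- The alternating sequence of positions `s, 3-s, s, ...` of length `k` (with `s ∈ {1,2}`). -/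
def altSeq : ℕ → ℕ → List ℕ
  | _, 0 => []
  | s, k + 1 => s :: altSeq (3 - s) k

/-- A quadratic normalisation: a length-preserving map, identity on letters,
satisfying `N(u|v|w) = N(u|N(v)|w)`, for which a word is normal iff all its
length-two factors are, and which is computed by finitely many applications
of its restriction to length-two factors. -/
structure QuadraticNormalisation {A : Type*} (N : List A → List A) : Prop where
  len : ∀ w : List A, (N w).length = w.length
  letter : ∀ a : A, N [a] = [a]
  mid : ∀ u v w : List A, N (u ++ v ++ w) = N (u ++ N v ++ w)
  normal_iff : ∀ w : List A, N w = w ↔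
    ∀ (u v : List A) (a b : A), w = u ++ a :: b :: v → N [a, b] = [a, b]
  reach : ∀ w : List A, ∃ pos : List ℕ, N w = applySeq N pos w

/-- The normalisation is of left-class `m`. -/
def LeftClass {A : Type*} (N : List A → List A) (m : ℕ) : Prop :=
  ∀ w : List A, w.length = 3 → N w = applySeq N (altSeq 1 m) w

/-- The normalisation is of right-class `n`. -/
def RightClass {A : Type*} (N : List A → List A) (n : ℕ) : Prop :=
  ∀ w : List A, w.length = 3 → N w = applySeq N (altSeq 2 n) w

/-- The normalisation is of class `(m, n)`. -/
def IsClass {A : Type*} (N : List A → List A) (m n : ℕ) : Prop :=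
  LeftClass N m ∧ RightClass N n

/-- `e` is an `N`-neutral element: `N(w|e) = N(e|w) = N(w)|e` for every word `w`. -/
def Neutral {A : Type*} (N : List A → List A) (e : A) : Prop :=
  ∀ w : List A, N (w ++ [e]) = N w ++ [e] ∧ N (e :: w) = N w ++ [e]

private lemma length_eq_three {A : Type*} {w : List A} (h : w.length = 3) :
    ∃ a b c, w = [a, b, c] := by
  match w, h with
  | [a, b, c], _ => exact ⟨a, b, c, rfl⟩

private lemma left_to_right {A : Type*} {N : List A → List A}
    (hN : QuadraticNormalisation N) {m : ℕ} (hL : LeftClass N m) :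
    RightClass N (m + 1) := by
  intro w hw
  obtain ⟨a, b, c, rfl⟩ := length_eq_three hw
  have h2 : applyAt N 2 [a, b, c] = a :: N [b, c] := by
    simp [applyAt]
  have hlen : (a :: N [b, c]).length = 3 := by
    simp [hN.len [b, c]]
  have hmid : N [a, b, c] = N (a :: N [b, c]) := by
    have := hN.mid [a] [b, c] []
    simpa using this
  have : applySeq N (altSeq 2 (m + 1)) [a, b, c]
      = applySeq N (altSeq 1 m) (a :: N [b, c]) := by
    show applySeq N (2 :: altSeq 1 m) [a, b, c] = _
    simp only [applySeq, List.foldl_cons, h2]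
  rw [this, ← hL _ hlen, hmid]

private lemma right_to_left {A : Type*} {N : List A → List A}
    (hN : QuadraticNormalisation N) {n : ℕ} (hR : RightClass N n) :
    LeftClass N (n + 1) := by
  intro w hw
  obtain ⟨a, b, c, rfl⟩ := length_eq_three hw
  have h1 : applyAt N 1 [a, b, c] = N [a, b] ++ [c] := by
    simp [applyAt]
  have hlen : (N [a, b] ++ [c]).length = 3 := by
    simp [hN.len [a, b]]
  have hmid : N [a, b, c] = N (N [a, b] ++ [c]) := by
    have := hN.mid [] [a, b] [c]
    simpa using this
  have : applySeq N (altSeq 1 (n + 1)) [a, b, c]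
      = applySeq N (altSeq 2 n) (N [a, b] ++ [c]) := by
    show applySeq N (1 :: altSeq 2 n) [a, b, c] = _
    simp only [applySeq, List.foldl_cons, h1]
  rw [this, ← hR _ hlen, hmid]

/-- the minimal class of a quadratic normalisation is either a pair
`(m, n)` of naturals with `|m - n| ≤ 1`, or `(∞, ∞)` (i.e. neither class exists). -/
theorem minimal_class {A : Type*} (N : List A → List A)
    (hN : QuadraticNormalisation N) :
    ((∃ m : ℕ, LeftClass N m) ↔ (∃ n : ℕ, RightClass N n)) ∧
    ((∃ m : ℕ, LeftClass N m) → (∃ n : ℕ, RightClass N n) →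
      sInf {m : ℕ | LeftClass N m} ≤ sInf {n : ℕ | RightClass N n} + 1 ∧
      sInf {n : ℕ | RightClass N n} ≤ sInf {m : ℕ | LeftClass N m} + 1) := by
  constructor
  · constructor
    · rintro ⟨m, hm⟩; exact ⟨m + 1, left_to_right hN hm⟩
    · rintro ⟨n, hn⟩; exact ⟨n + 1, right_to_left hN hn⟩
  · rintro ⟨m, hm⟩ ⟨n, hn⟩
    have hLne : {m : ℕ | LeftClass N m}.Nonempty := ⟨m, hm⟩
    have hRne : {n : ℕ | RightClass N n}.Nonempty := ⟨n, hn⟩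
    have hLmem : LeftClass N (sInf {m : ℕ | LeftClass N m}) := Nat.sInf_mem hLne
    have hRmem : RightClass N (sInf {n : ℕ | RightClass N n}) := Nat.sInf_mem hRne
    exact ⟨Nat.sInf_le (right_to_left hN hRmem), Nat.sInf_le (left_to_right hN hLmem)⟩
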